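/- For integers k ≥ 0 and ℓ ≥ 1, the number of integers n in [2^k, 2^{k+1}) whose binary expansion contains exactly ℓ maximal blocks of consecutive 1s equals the binomial coefficient C(k+1, 2ℓ−1). -/

import Mathlib

/-- The number of maximal blocks of consecutive 1s in the binary expansion of `N`. -/
def blockCount (N : ℕ) : ℕ :=
  ((Finset.range (N + 1)).filter fun i => N.testBit i ∧ ¬ N.testBit (i + 1)).card

lemma testBit_bound {N i : ℕ} (h : N.testBit i) : i < N + 1 := by
  have h2 : 2^i ≤ N := by
    by_contra hc
    simp [Nat.testBit_lt_two_pow (show N < 2^i by omega)] at h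
  have := Nat.lt_two_pow_self (n := i)
  omega

lemma blockCount_eq_range {N M : ℕ} (h : N < M) :
    blockCount N = ((Finset.range M).filter fun i => N.testBit i ∧ ¬ N.testBit (i + 1)).card := by
  unfold blockCount
  congr 1
  ext i
  simp only [Finset.mem_filter, Finset.mem_range]
  exact ⟨fun ⟨_, h1, h2⟩ => ⟨by have := testBit_bound h1; omega, h1, h2⟩,
    fun ⟨_, h1, h2⟩ => ⟨testBit_bound h1, h1, h2⟩⟩

lemma testBit_two_mul (m i : ℕ) : (2*m).testBit (i+1) = m.testBit i := by
  simp [Nat.testBit_succ]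

lemma testBit_two_mul_zero (m : ℕ) : (2*m).testBit 0 = false := by
  simp [Nat.testBit_zero, Nat.mul_mod_right]

lemma testBit_two_mul_add_one (m i : ℕ) : (2*m+1).testBit (i+1) = m.testBit i := by
  rw [Nat.testBit_succ]; congr 1; omega

lemma testBit_two_mul_add_one_zero (m : ℕ) : (2*m+1).testBit 0 = true := by
  rw [Nat.testBit_zero]; simp [Nat.mul_add_mod]

lemma range_succ_eq_insert_zero (M : ℕ) :
    Finset.range (M+1) = insert 0 ((Finset.range M).image (·+1)) := by
  ext i
  simp only [Finset.mem_range, Finset.mem_insert, Finset.mem_image]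
  constructor
  · intro h
    rcases Nat.eq_zero_or_pos i with h0 | h0
    · exact Or.inl h0
    · exact Or.inr ⟨i-1, by omega, by omega⟩
  · rintro (rfl | ⟨j, hj, rfl⟩) <;> omega

lemma card_filter_range_succ (P : ℕ → Prop) [DecidablePred P] (M : ℕ) :
    ((Finset.range (M+1)).filter P).card
      = (if P 0 then 1 else 0) + ((Finset.range M).filter fun i => P (i+1)).card := by
  rw [range_succ_eq_insert_zero, Finset.filter_insert]
  have himg : ((Finset.range M).image (·+1)).filter P
      = ((Finset.range M).filter fun i => P (i+1)).image (·+1) := by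
    rw [Finset.filter_image]
  have hcard : (((Finset.range M).image (·+1)).filter P).card
      = ((Finset.range M).filter fun i => P (i+1)).card := by
    rw [himg, Finset.card_image_of_injective _ (fun a b => by omega)]
  by_cases h : P 0
  · rw [if_pos h, if_pos h, Finset.card_insert_of_notMem, hcard]
    · omega
    · rw [himg]; simp
  · rw [if_neg h, if_neg h, hcard]; omega

lemma blockCount_two_mul (m : ℕ) : blockCount (2*m) = blockCount m := by
  rw [blockCount_eq_range (show 2*m < 2*m+2 by omega), card_filter_range_succ]
  simp only [testBit_two_mul_zero, testBit_two_mul]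
  rw [blockCount_eq_range (show m < 2*m+1 by omega)]
  simp

lemma blockCount_two_mul_add_one_odd (m : ℕ) (hm : Odd m) :
    blockCount (2*m+1) = blockCount m := by
  rw [blockCount_eq_range (show 2*m+1 < 2*m+3 by omega), card_filter_range_succ]
  simp only [testBit_two_mul_add_one_zero, testBit_two_mul_add_one]
  rw [blockCount_eq_range (show m < 2*m+2 by omega)]
  have h0 : m.testBit 0 = true := by
    rw [Nat.testBit_zero]; simpa [Nat.odd_iff] using hm
  simp [h0]

lemma blockCount_two_mul_add_one_even (m : ℕ) (hm : ¬ Odd m) :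
    blockCount (2*m+1) = blockCount m + 1 := by
  rw [blockCount_eq_range (show 2*m+1 < 2*m+3 by omega), card_filter_range_succ]
  simp only [testBit_two_mul_add_one_zero, testBit_two_mul_add_one]
  rw [blockCount_eq_range (show m < 2*m+2 by omega)]
  have h0 : m.testBit 0 = false := by
    rw [Nat.testBit_zero]
    simp only [Nat.odd_iff] at hm
    simp [show m % 2 = 0 by omega]
  simp [h0]
  omega

lemma blockCount_pos : ∀ n, 1 ≤ n → 1 ≤ blockCount n := by
  intro n
  induction n using Nat.strong_induction_on with
  | _ n ih =>
    intro hn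
    rcases Nat.even_or_odd n with he | ho
    · obtain ⟨m, rfl⟩ := he
      rw [show m + m = 2*m by ring, blockCount_two_mul]
      exact ih m (by omega) (by omega)
    · obtain ⟨m, rfl⟩ := ho
      rcases Nat.even_or_odd m with hme | hmo
      · rw [blockCount_two_mul_add_one_even m (Nat.not_odd_iff_even.mpr hme)]
        omega
      · rw [blockCount_two_mul_add_one_odd m hmo]
        exact ih m (by omega) (by rcases hmo with ⟨j, hj⟩; omega)

lemma card_even_double (a b : ℕ) (p : ℕ → Prop) [DecidablePred p] :
    ((Finset.Ico (2*a) (2*b)).filter fun n => p n ∧ ¬ Odd n).card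
      = ((Finset.Ico a b).filter fun m => p (2*m)).card := by
  refine Finset.card_nbij' (fun n => n / 2) (fun m => 2 * m) ?_ ?_ ?_ ?_
  · intro n hn
    simp only [Finset.mem_coe, Finset.mem_filter, Finset.mem_Ico, Nat.odd_iff] at hn ⊢
    obtain ⟨⟨h1, h2⟩, hp, hpar⟩ := hn
    have h2m : 2 * (n / 2) = n := by omega
    rw [h2m]
    exact ⟨⟨by omega, by omega⟩, hp⟩
  · intro m hm
    simp only [Finset.mem_coe, Finset.mem_filter, Finset.mem_Ico, Nat.odd_iff] at hm ⊢
    exact ⟨⟨by omega, by omega⟩, hm.2, by omega⟩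
  · intro n hn
    simp only [Finset.mem_coe, Finset.mem_filter, Finset.mem_Ico, Nat.odd_iff] at hn
    show 2 * (n / 2) = n
    omega
  · intro m _
    show 2 * m / 2 = m
    omega

lemma card_odd_double (a b : ℕ) (p : ℕ → Prop) [DecidablePred p] :
    ((Finset.Ico (2*a) (2*b)).filter fun n => p n ∧ Odd n).card
      = ((Finset.Ico a b).filter fun m => p (2*m+1)).card := by
  refine Finset.card_nbij' (fun n => n / 2) (fun m => 2 * m + 1) ?_ ?_ ?_ ?_
  · intro n hn
    simp only [Finset.mem_coe, Finset.mem_filter, Finset.mem_Ico, Nat.odd_iff] at hn ⊢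
    obtain ⟨⟨h1, h2⟩, hp, hpar⟩ := hn
    have h2m : 2 * (n / 2) + 1 = n := by omega
    rw [h2m]
    exact ⟨⟨by omega, by omega⟩, hp⟩
  · intro m hm
    simp only [Finset.mem_coe, Finset.mem_filter, Finset.mem_Ico, Nat.odd_iff] at hm ⊢
    exact ⟨⟨by omega, by omega⟩, hm.2, by omega⟩
  · intro n hn
    simp only [Finset.mem_coe, Finset.mem_filter, Finset.mem_Ico, Nat.odd_iff] at hn
    show 2 * (n / 2) + 1 = n
    omega
  · intro m _
    show (2 * m + 1) / 2 = m
    omega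

def oc (k ℓ : ℕ) : ℕ :=
  ((Finset.Ico (2^k) (2^(k+1))).filter fun n => blockCount n = ℓ ∧ Odd n).card

def ec (k ℓ : ℕ) : ℕ :=
  ((Finset.Ico (2^k) (2^(k+1))).filter fun n => blockCount n = ℓ ∧ ¬ Odd n).card

lemma total_split (k ℓ : ℕ) :
    ((Finset.Ico (2^k) (2^(k+1))).filter fun n => blockCount n = ℓ).card
      = oc k ℓ + ec k ℓ := by
  rw [oc, ec, ← Finset.filter_filter, ← Finset.filter_filter,
    Finset.card_filter_add_card_filter_not]

lemma ec_zero (k : ℕ) : ec k 0 = 0 := by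
  rw [ec, Finset.card_eq_zero, Finset.filter_eq_empty_iff]
  rintro n hn ⟨hb, -⟩
  have h1 : 1 ≤ n := by
    have := Nat.one_le_two_pow (n := k)
    simp only [Finset.mem_Ico] at hn
    omega
  have := blockCount_pos n h1
  omega

lemma ec_succ (k ℓ : ℕ) : ec (k+1) ℓ = oc k ℓ + ec k ℓ := by
  rw [ec, show (2:ℕ)^(k+1) = 2 * 2^k by ring, show (2:ℕ)^(k+1+1) = 2 * 2^(k+1) by ring,
    card_even_double]
  rw [Finset.filter_congr (fun m _ => by rw [blockCount_two_mul])]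
  exact total_split k ℓ

lemma oc_succ (k ℓ : ℕ) (hℓ : 1 ≤ ℓ) : oc (k+1) ℓ = oc k ℓ + ec k (ℓ-1) := by
  rw [oc, show (2:ℕ)^(k+1) = 2 * 2^k by ring, show (2:ℕ)^(k+1+1) = 2 * 2^(k+1) by ring,
    card_odd_double]
  have hsplit := Finset.card_filter_add_card_filter_not
    (s := (Finset.Ico (2^k) (2^(k+1))).filter fun m => blockCount (2*m+1) = ℓ)
    (p := fun m => Odd m)
  rw [Finset.filter_filter, Finset.filter_filter] at hsplit
  rw [← hsplit, oc, ec]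
  congr 1
  · refine congrArg Finset.card (Finset.filter_congr ?_)
    intro m _
    by_cases h : Odd m
    · simp [h, blockCount_two_mul_add_one_odd m h]
    · simp [h]
  · refine congrArg Finset.card (Finset.filter_congr ?_)
    intro m _
    by_cases h : Odd m
    · simp [h]
    · rw [blockCount_two_mul_add_one_even m h]
      simp only [h, not_false_iff, and_true]
      omega

lemma oc_ec_formula : ∀ k ℓ, 1 ≤ ℓ →
    oc k ℓ = k.choose (2*ℓ-2) ∧ ec k ℓ = k.choose (2*ℓ-1) := by
  intro k
  induction k with
  | zero =>
    intro ℓ hℓ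
    have hIco : Finset.Ico (2^0) (2^(0+1)) = {1} := by decide
    have hbc : blockCount 1 = 1 := by decide
    constructor
    · rw [oc, hIco, Finset.filter_singleton]
      by_cases h : ℓ = 1
      · subst h; simp [hbc]
      · rw [if_neg (by simp [hbc]; omega), Nat.choose_eq_zero_of_lt (by omega)]
        simp
    · rw [ec, hIco, Finset.filter_singleton, if_neg (by simp), Nat.choose_eq_zero_of_lt (by omega)]
      simp
  | succ k ih =>
    intro ℓ hℓ
    constructor
    · rw [oc_succ k ℓ hℓ]
      by_cases h : ℓ = 1
      · subst h
        rw [(ih 1 le_rfl).1, show (1:ℕ)-1 = 0 from rfl, ec_zero]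
        simp
      · obtain ⟨j, rfl⟩ : ∃ j, ℓ = j + 2 := ⟨ℓ - 2, by omega⟩
        rw [(ih (j+2) (by omega)).1, show j+2-1 = j+1 from rfl, (ih (j+1) (by omega)).2]
        rw [show 2*(j+2)-2 = (2*j+1)+1 by omega, show 2*(j+1)-1 = 2*j+1 by omega,
          Nat.choose_succ_succ']
        omega
    · rw [ec_succ]
      obtain ⟨j, rfl⟩ : ∃ j, ℓ = j + 1 := ⟨ℓ - 1, by omega⟩
      rw [(ih (j+1) (by omega)).1, (ih (j+1) (by omega)).2]
      rw [show 2*(j+1)-2 = 2*j by omega, show 2*(j+1)-1 = 2*j+1 by omega,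
        Nat.choose_succ_succ']

theorem count_blockCount_eq_choose (k ℓ : ℕ) (hℓ : 1 ≤ ℓ) :
    ((Finset.Ico (2 ^ k) (2 ^ (k + 1))).filter fun n => blockCount n = ℓ).card
      = (k + 1).choose (2 * ℓ - 1) := by
  rw [total_split k ℓ, (oc_ec_formula k ℓ hℓ).1, (oc_ec_formula k ℓ hℓ).2]
  obtain ⟨j, rfl⟩ : ∃ j, ℓ = j + 1 := ⟨ℓ - 1, by omega⟩
  rw [show 2*(j+1)-2 = 2*j by omega, show 2*(j+1)-1 = 2*j+1 by omega,
    Nat.choose_succ_succ']
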